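/- arXiv:1808.01494 — 2 statements merged into one kernel-verified Lean document; each statement's English description precedes it below -/
import Mathlib

section
/- Let a < b and c, Q ∈ ℝ. Suppose ψ : ℝ × (a,b] → ℝ is continuously differentiable on ℝ × (a,b], twice continuously differentiable and harmonic (ψ_xx + ψ_yy = 0) in the open strip ℝ × (a,b), and satisfies ψ(x,b) = Q and ∂ψ/∂y (x,b) = c for all x ∈ ℝ. Then ψ(x,y) = c·(y−b) + Q for all (x,y) ∈ ℝ × (a,b]. -/
open Set Filter

/-- The Laplacian `f_xx + f_yy` of `f : ℝ × ℝ → ℝ`. -/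
noncomputable def lap (f : ℝ × ℝ → ℝ) (p : ℝ × ℝ) : ℝ :=
  fderiv ℝ (fun q => fderiv ℝ f q (1, 0)) p (1, 0) +
    fderiv ℝ (fun q => fderiv ℝ f q (0, 1)) p (0, 1)

section Aux

open Complex intervalIntegral


/-- Morera-type: continuous on an open strip, with vanishing rectangle integrals,
implies the function is (complex) differentiable on the strip. -/
lemma morera_strip {G : ℂ → ℂ} {A B : ℝ} (hAB : A < B)
    (hc : ContinuousOn G {z : ℂ | A < z.im ∧ z.im < B})
    (hrect : ∀ x₁ x₂ y₁ y₂ : ℝ, y₁ ∈ Ioo A B → y₂ ∈ Ioo A B →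
      (∫ x in x₁..x₂, G (x + y₁*Complex.I)) - (∫ x in x₁..x₂, G (x + y₂*Complex.I)) +
      Complex.I • (∫ y in y₁..y₂, G (x₂ + y*Complex.I)) -
      Complex.I • (∫ y in y₁..y₂, G (x₁ + y*Complex.I)) = 0) :
    DifferentiableOn ℂ G {z : ℂ | A < z.im ∧ z.im < B} := by
  set Ω : Set ℂ := {z : ℂ | A < z.im ∧ z.im < B} with hΩdef
  have hΩ : IsOpen Ω := by
    have : Ω = Complex.im ⁻¹' (Ioo A B) := rfl
    rw [this]; exact isOpen_Ioo.preimage Complex.continuous_im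
  set c₀ : ℝ := (A + B) / 2 with hc₀
  have hc₀m : c₀ ∈ Ioo A B := ⟨by simp [hc₀]; linarith, by simp [hc₀]; linarith⟩
  -- horizontal integrability
  have hsegH : ∀ (y : ℝ), y ∈ Ioo A B → ∀ x₁ x₂ : ℝ,
      IntervalIntegrable (fun t : ℝ => G (t + y*Complex.I)) MeasureTheory.volume x₁ x₂ := by
    intro y hy x₁ x₂
    apply ContinuousOn.intervalIntegrable
    apply hc.comp (by fun_prop)
    intro t _; simp [hΩdef, hy.1, hy.2]
  have hsegV : ∀ (x y₁ y₂ : ℝ), y₁ ∈ Ioo A B → y₂ ∈ Ioo A B →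
      IntervalIntegrable (fun s : ℝ => G (x + s*Complex.I)) MeasureTheory.volume y₁ y₂ := by
    intro x y₁ y₂ h₁ h₂
    apply ContinuousOn.intervalIntegrable
    apply hc.comp (by fun_prop)
    intro s hs
    have : s ∈ Ioo A B := Set.ordConnected_Ioo.uIcc_subset h₁ h₂ hs
    simp [hΩdef, this.1, this.2]
  set F : ℂ → ℂ := fun z => (∫ t in (0:ℝ)..z.re, G (t + c₀*Complex.I)) +
      Complex.I • ∫ s in c₀..z.im, G (z.re + s*Complex.I) with hF
  have key : ∀ z₁ ∈ Ω, HasDerivAt F (G z₁) z₁ := by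
    intro z₁ hz₁
    obtain ⟨hq1, hq2⟩ := hz₁
    set p := z₁.re with hp
    set q := z₁.im with hq
    have hqm : q ∈ Ioo A B := ⟨hq1, hq2⟩
    -- representation of F z for z ∈ Ω
    have repr : ∀ z ∈ Ω, F z = F z₁ + (∫ t in p..z.re, G (t + q*Complex.I)) +
        Complex.I • ∫ s in q..z.im, G (z.re + s*Complex.I) := by
      intro z hz
      have hzim : z.im ∈ Ioo A B := ⟨hz.1, hz.2⟩
      have hsplit : (∫ s in c₀..z.im, G (z.re + s*Complex.I)) =
          (∫ s in c₀..q, G (z.re + s*Complex.I)) + ∫ s in q..z.im, G (z.re + s*Complex.I) :=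
        (integral_add_adjacent_intervals (hsegV _ _ _ hc₀m hqm) (hsegV _ _ _ hqm hzim)).symm
      have hsplit2 : (∫ t in (0:ℝ)..z.re, G (t + c₀*Complex.I)) =
          (∫ t in (0:ℝ)..p, G (t + c₀*Complex.I)) + ∫ t in p..z.re, G (t + c₀*Complex.I) :=
        (integral_add_adjacent_intervals (hsegH _ hc₀m _ _) (hsegH _ hc₀m _ _)).symm
      have hr := hrect p z.re c₀ q hc₀m hqm
      have : (∫ t in p..z.re, G (t + c₀*Complex.I)) + Complex.I • (∫ s in c₀..q, G (z.re + s*Complex.I))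
          = (∫ t in p..z.re, G (t + q*Complex.I)) + Complex.I • (∫ s in c₀..q, G (p + s*Complex.I)) := by
        linear_combination hr
      rw [hF]
      simp only [hsplit, hsplit2, smul_add]
      rw [show z₁.re = p from hp.symm, show z₁.im = q from hq.symm]
      linear_combination this
    -- the difference estimate
    rw [hasDerivAt_iff_isLittleO]
    rw [Asymptotics.isLittleO_iff]
    intro C hC
    have hcont : ContinuousAt G z₁ := hc.continuousAt (hΩ.mem_nhds ⟨hq1, hq2⟩)
    rw [Metric.continuousAt_iff] at hcont
    obtain ⟨δ₁, hδ₁, hball⟩ := hcont (C/2) (by positivity)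
    obtain ⟨δ₂, hδ₂, hball₂⟩ := Metric.isOpen_iff.1 hΩ z₁ ⟨hq1, hq2⟩
    set δ := min δ₁ δ₂ / 2 with hδdef
    have hδ : 0 < δ := by positivity
    filter_upwards [Metric.ball_mem_nhds z₁ hδ] with z hzball
    have hzΩ : z ∈ Ω := hball₂ (by
      refine Metric.ball_subset_ball ?_ hzball
      calc δ ≤ min δ₁ δ₂ := by rw [hδdef]; linarith [le_refl (min δ₁ δ₂)]
      _ ≤ δ₂ := min_le_right _ _)
    have hdz : dist z z₁ < δ := hzball
    have hre : |z.re - p| ≤ dist z z₁ := by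
      rw [Complex.dist_eq, ← Complex.sub_re]
      exact Complex.abs_re_le_norm _
    have him : |z.im - q| ≤ dist z z₁ := by
      rw [Complex.dist_eq, ← Complex.sub_im]
      exact Complex.abs_im_le_norm _
    -- rewrite
    rw [repr z hzΩ]
    have hconst1 : (∫ t in p..z.re, G z₁) = (z.re - p) • G z₁ := integral_const _
    have hconst2 : (∫ s in q..z.im, G z₁) = (z.im - q) • G z₁ := integral_const _
    have hzz : z - z₁ = ((z.re - p : ℝ) : ℂ) + ((z.im - q : ℝ) : ℂ) * Complex.I := by
      rw [Complex.ext_iff]; simp [hp, hq]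
    have expand : F z₁ + (∫ t in p..z.re, G (t + q*Complex.I)) +
        Complex.I • (∫ s in q..z.im, G (z.re + s*Complex.I)) - F z₁ - (z - z₁) • G z₁
        = (∫ t in p..z.re, (G (t + q*Complex.I) - G z₁)) +
          Complex.I • (∫ s in q..z.im, (G (z.re + s*Complex.I) - G z₁)) := by
      rw [intervalIntegral.integral_sub (hsegH _ hqm _ _) intervalIntegrable_const,
        intervalIntegral.integral_sub (hsegV _ _ _ hqm ⟨hzΩ.1, hzΩ.2⟩) intervalIntegrable_const,
        hconst1, hconst2, hzz]
      push_cast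
      ring_nf
      simp [smul_eq_mul]
      ring
    rw [expand]
    -- estimates
    have estH : ‖∫ t in p..z.re, (G (t + q*Complex.I) - G z₁)‖ ≤ (C/2) * |z.re - p| := by
      apply intervalIntegral.norm_integral_le_of_norm_le_const
      intro t ht
      have htp : |t - p| ≤ |z.re - p| := by
        rcases ht with ⟨h1, h2⟩
        rcases le_total p z.re with h | h
        · rw [min_eq_left h] at h1; rw [max_eq_right h] at h2
          rw [_root_.abs_of_nonneg (by linarith), _root_.abs_of_nonneg (by linarith)]; linarith
        · rw [min_eq_right h] at h1; rw [max_eq_left h] at h2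
          rw [_root_.abs_of_nonpos (by linarith), _root_.abs_of_nonpos (by linarith)]; linarith
      have hdist : dist ((t : ℂ) + q*Complex.I) z₁ < δ₁ := by
        have heq : (t:ℂ) + q*Complex.I - z₁ = ((t - p : ℝ) : ℂ) := by
          rw [Complex.ext_iff]; constructor <;> simp [hp, hq]
        rw [Complex.dist_eq, heq, Complex.norm_real, Real.norm_eq_abs]
        calc |t - p| ≤ |z.re - p| := htp
          _ ≤ dist z z₁ := hre
          _ < δ := hdz
          _ ≤ δ₁ := by rw [hδdef]; have := min_le_left δ₁ δ₂; linarith [hδ₂, min_le_left δ₁ δ₂]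
      exact le_of_lt (by simpa [dist_eq_norm] using hball hdist)
    have estV : ‖∫ s in q..z.im, (G (z.re + s*Complex.I) - G z₁)‖ ≤ (C/2) * |z.im - q| := by
      apply intervalIntegral.norm_integral_le_of_norm_le_const
      intro s hs
      have hsq : |s - q| ≤ |z.im - q| := by
        rcases hs with ⟨h1, h2⟩
        rcases le_total q z.im with h | h
        · rw [min_eq_left h] at h1; rw [max_eq_right h] at h2
          rw [_root_.abs_of_nonneg (by linarith), _root_.abs_of_nonneg (by linarith)]; linarith
        · rw [min_eq_right h] at h1; rw [max_eq_left h] at h2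
          rw [_root_.abs_of_nonpos (by linarith), _root_.abs_of_nonpos (by linarith)]; linarith
      have hdist : dist ((z.re : ℂ) + s*Complex.I) z₁ < δ₁ := by
        have heq : (z.re : ℂ) + s*Complex.I - z₁ = ((z.re - p : ℝ) : ℂ) + ((s - q : ℝ) : ℂ) * Complex.I := by
          rw [Complex.ext_iff]; constructor <;> simp [hp, hq]
        rw [Complex.dist_eq, heq]
        calc ‖((z.re - p : ℝ) : ℂ) + ((s - q : ℝ) : ℂ) * Complex.I‖
            ≤ ‖((z.re - p : ℝ) : ℂ)‖ + ‖((s - q : ℝ) : ℂ) * Complex.I‖ := norm_add_le _ _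
          _ = |z.re - p| + |s - q| := by
              simp [← Complex.ofReal_sub, Complex.norm_real, Real.norm_eq_abs]
          _ ≤ dist z z₁ + dist z z₁ := by
              gcongr
              exact le_trans hsq him
          _ < 2 * δ := by linarith
          _ ≤ δ₁ := by
              rw [hδdef]
              have := min_le_left δ₁ δ₂; linarith
      exact le_of_lt (by simpa [dist_eq_norm] using hball hdist)
    calc ‖(∫ t in p..z.re, (G (t + q*Complex.I) - G z₁)) +
          Complex.I • (∫ s in q..z.im, (G (z.re + s*Complex.I) - G z₁))‖
        ≤ ‖∫ t in p..z.re, (G (t + q*Complex.I) - G z₁)‖ +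
          ‖Complex.I • (∫ s in q..z.im, (G (z.re + s*Complex.I) - G z₁))‖ := norm_add_le _ _
      _ ≤ (C/2) * |z.re - p| + (C/2) * |z.im - q| := by
          rw [norm_smul]
          simp only [Complex.norm_I, one_mul]
          exact add_le_add estH estV
      _ ≤ (C/2) * ‖z - z₁‖ + (C/2) * ‖z - z₁‖ := by
          have h1 : |z.re - p| ≤ ‖z - z₁‖ := by rw [← dist_eq_norm]; exact hre
          have h2 : |z.im - q| ≤ ‖z - z₁‖ := by rw [← dist_eq_norm]; exact him
          gcongr
      _ = C * ‖z - z₁‖ := by ring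
  -- conclude
  have hFdiff : DifferentiableOn ℂ F Ω := fun z hz => (key z hz).differentiableAt.differentiableWithinAt
  have hFan : AnalyticOnNhd ℂ F Ω := hFdiff.analyticOnNhd hΩ
  have hderivan : AnalyticOnNhd ℂ (deriv F) Ω := hFan.deriv
  intro z hz
  have heq : deriv F =ᶠ[nhds z] G := by
    filter_upwards [hΩ.mem_nhds hz] with w hw
    exact (key w hw).deriv
  exact ((hderivan z hz).differentiableAt.congr_of_eventuallyEq heq.symm).differentiableWithinAt

/-- A function continuous on `{A < im ≤ b}`, holomorphic on `{A < im < b}`, vanishing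
on the line `im = b`, vanishes identically on the open strip. -/
lemma strip_zero {g : ℂ → ℂ} {A b : ℝ} (hAb : A < b)
    (hc : ContinuousOn g {z : ℂ | A < z.im ∧ z.im ≤ b})
    (hd : ∀ z : ℂ, A < z.im → z.im < b → DifferentiableAt ℂ g z)
    (hbd : ∀ z : ℂ, z.im = b → g z = 0) :
    ∀ z : ℂ, A < z.im → z.im < b → g z = 0 := by
  set B : ℝ := 2*b - A with hB
  have hbB : b < B := by rw [hB]; linarith
  have hAB : A < B := lt_trans hAb hbB
  have hbIoo : b ∈ Ioo A B := ⟨hAb, hbB⟩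
  set G : ℂ → ℂ := fun z => if z.im < b then g z else 0 with hG
  set Ω : Set ℂ := {z : ℂ | A < z.im ∧ z.im < B} with hΩdef
  have hΩ : IsOpen Ω := by
    have : Ω = Complex.im ⁻¹' (Ioo A B) := rfl
    rw [this]; exact isOpen_Ioo.preimage Complex.continuous_im
  have hlow : IsOpen {z : ℂ | A < z.im ∧ z.im < b} := by
    have : {z : ℂ | A < z.im ∧ z.im < b} = Complex.im ⁻¹' (Ioo A b) := rfl
    rw [this]; exact isOpen_Ioo.preimage Complex.continuous_im
  have hup : IsOpen {z : ℂ | b < z.im} := by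
    have : {z : ℂ | b < z.im} = Complex.im ⁻¹' (Ioi b) := rfl
    rw [this]; exact isOpen_Ioi.preimage Complex.continuous_im
  have hGg : ∀ z : ℂ, A < z.im → z.im < b → G z = g z := fun z _ h2 => if_pos h2
  have hG0 : ∀ z : ℂ, b ≤ z.im → G z = 0 := fun z h => if_neg (not_lt.2 h)
  -- continuity of G on Ω
  have hGc : ContinuousOn G Ω := by
    intro z hz
    rcases lt_trichotomy z.im b with h | h | h
    · apply ContinuousAt.continuousWithinAt
      have hmem : {w : ℂ | A < w.im ∧ w.im < b} ∈ nhds z := hlow.mem_nhds ⟨hz.1, h⟩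
      have : ContinuousAt g z := hc.continuousAt
        (by filter_upwards [hmem] with w hw; exact ⟨hw.1, le_of_lt hw.2⟩)
      apply this.congr
      filter_upwards [hmem] with w hw using (hGg w hw.1 hw.2).symm
    · -- on the line
      apply ContinuousWithinAt.mono _ (le_refl Ω).subset
      have h1 : ContinuousWithinAt G {w : ℂ | A < w.im ∧ w.im ≤ b} z := by
        have : ContinuousWithinAt g {w : ℂ | A < w.im ∧ w.im ≤ b} z :=
          hc z ⟨hz.1, le_of_eq h⟩
        apply this.congr
        · intro w hw
          rcases lt_or_eq_of_le hw.2 with h' | h'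
          · exact hGg w hw.1 h'
          · rw [hG0 w (le_of_eq h'.symm), hbd w h']
        · rw [hG0 z (le_of_eq h.symm), hbd z h]
      have h2 : ContinuousWithinAt G {w : ℂ | b ≤ w.im} z := by
        have : ContinuousWithinAt (fun _ : ℂ => (0:ℂ)) {w : ℂ | b ≤ w.im} z :=
          continuousWithinAt_const
        apply this.congr
        · intro w hw; exact hG0 w hw
        · exact hG0 z (le_of_eq h.symm)
      have := h1.union h2
      apply this.mono
      intro w hw
      rcases le_or_gt w.im b with h' | h'
      · exact Or.inl ⟨hw.1, h'⟩
      · exact Or.inr (le_of_lt h')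
    · apply ContinuousAt.continuousWithinAt
      have hmem : {w : ℂ | b < w.im} ∈ nhds z := hup.mem_nhds h
      have : ContinuousAt (fun _ : ℂ => (0:ℂ)) z := continuousAt_const
      apply this.congr
      filter_upwards [hmem] with w hw using (hG0 w (le_of_lt hw)).symm
  -- differentiability of G off the line
  have hGd : ∀ z : ℂ, A < z.im → z.im < B → z.im ≠ b → DifferentiableAt ℂ G z := by
    intro z h1 h2 h3
    rcases lt_or_gt_of_ne h3 with h | h
    · have hmem : {w : ℂ | A < w.im ∧ w.im < b} ∈ nhds z := hlow.mem_nhds ⟨h1, h⟩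
      have heq : G =ᶠ[nhds z] g := by
        filter_upwards [hmem] with w hw using hGg w hw.1 hw.2
      exact (heq.differentiableAt_iff).2 (hd z h1 h)
    · have hmem : {w : ℂ | b < w.im} ∈ nhds z := hup.mem_nhds h
      have heq : G =ᶠ[nhds z] (fun _ => 0) := by
        filter_upwards [hmem] with w hw using hG0 w (le_of_lt hw)
      exact (heq.differentiableAt_iff).2 (differentiableAt_const _)
  -- integrability of G on segments
  have hsegV : ∀ (x y₁ y₂ : ℝ), y₁ ∈ Ioo A B → y₂ ∈ Ioo A B →
      IntervalIntegrable (fun s : ℝ => G (x + s*Complex.I)) MeasureTheory.volume y₁ y₂ := by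
    intro x y₁ y₂ h₁ h₂
    apply ContinuousOn.intervalIntegrable
    apply hGc.comp (by fun_prop)
    intro s hs
    have : s ∈ Ioo A B := Set.ordConnected_Ioo.uIcc_subset h₁ h₂ hs
    simp [hΩdef, this.1, this.2]
  -- basic rectangle vanishing (rectangle on one side of the line)
  have hbase : ∀ x₁ x₂ y₁ y₂ : ℝ, y₁ ∈ Ioo A B → y₂ ∈ Ioo A B →
      b ∉ Ioo (min y₁ y₂) (max y₁ y₂) →
      (∫ x in x₁..x₂, G (x + y₁*Complex.I)) - (∫ x in x₁..x₂, G (x + y₂*Complex.I)) +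
      Complex.I • (∫ y in y₁..y₂, G (x₂ + y*Complex.I)) -
      Complex.I • (∫ y in y₁..y₂, G (x₁ + y*Complex.I)) = 0 := by
    intro x₁ x₂ y₁ y₂ h₁ h₂ hnb
    have := integral_boundary_rect_eq_zero_of_continuousOn_of_differentiableOn G
      (x₁ + y₁*Complex.I) (x₂ + y₂*Complex.I)
      (by
        simp only [Complex.add_re, Complex.add_im, Complex.ofReal_re, Complex.ofReal_im,
          Complex.mul_re, Complex.mul_im, Complex.I_re, Complex.I_im]
        ring_nf
        apply hGc.mono
        intro w hw
        rw [Complex.mem_reProdIm] at hw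
        have : w.im ∈ Ioo A B := Set.ordConnected_Ioo.uIcc_subset h₁ h₂ hw.2
        exact ⟨this.1, this.2⟩)
      (by
        simp only [Complex.add_re, Complex.add_im, Complex.ofReal_re, Complex.ofReal_im,
          Complex.mul_re, Complex.mul_im, Complex.I_re, Complex.I_im]
        ring_nf
        intro w hw
        rw [Complex.mem_reProdIm] at hw
        have him : w.im ∈ Ioo (min y₁ y₂) (max y₁ y₂) := hw.2
        have h1 : w.im ∈ Ioo A B := by
          constructor
          · calc A < min y₁ y₂ := lt_min h₁.1 h₂.1
              _ < w.im := him.1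
          · calc w.im < max y₁ y₂ := him.2
              _ < B := max_lt h₁.2 h₂.2
        have hne : w.im ≠ b := fun hh => hnb (hh ▸ him)
        exact (hGd w h1.1 h1.2 hne).differentiableWithinAt)
    simpa using this
  -- full rectangle vanishing
  have hrect : ∀ x₁ x₂ y₁ y₂ : ℝ, y₁ ∈ Ioo A B → y₂ ∈ Ioo A B →
      (∫ x in x₁..x₂, G (x + y₁*Complex.I)) - (∫ x in x₁..x₂, G (x + y₂*Complex.I)) +
      Complex.I • (∫ y in y₁..y₂, G (x₂ + y*Complex.I)) -
      Complex.I • (∫ y in y₁..y₂, G (x₁ + y*Complex.I)) = 0 := by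
    intro x₁ x₂ y₁ y₂ h₁ h₂
    rcases le_or_gt y₁ b with hy₁ | hy₁ <;> rcases le_or_gt y₂ b with hy₂ | hy₂
    · -- both below
      apply hbase x₁ x₂ y₁ y₂ h₁ h₂
      intro hmem; exact absurd (max_le hy₁ hy₂) (not_le.2 hmem.2)
    · -- y₁ ≤ b < y₂ : split at b
      have e1 := hbase x₁ x₂ y₁ b h₁ hbIoo (by
        intro hmem; exact absurd (max_le hy₁ le_rfl) (not_le.2 hmem.2))
      have e2 := hbase x₁ x₂ b y₂ hbIoo h₂ (by
        intro hmem; have := hmem.1; rw [min_eq_left (le_of_lt hy₂)] at this; exact lt_irrefl _ this)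
      have a1 : (∫ y in y₁..b, G (x₂ + y*Complex.I)) + (∫ y in b..y₂, G (x₂ + y*Complex.I))
          = ∫ y in y₁..y₂, G (x₂ + y*Complex.I) :=
        integral_add_adjacent_intervals (hsegV _ _ _ h₁ hbIoo) (hsegV _ _ _ hbIoo h₂)
      have a2 : (∫ y in y₁..b, G (x₁ + y*Complex.I)) + (∫ y in b..y₂, G (x₁ + y*Complex.I))
          = ∫ y in y₁..y₂, G (x₁ + y*Complex.I) :=
        integral_add_adjacent_intervals (hsegV _ _ _ h₁ hbIoo) (hsegV _ _ _ hbIoo h₂)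
      rw [← a1, ← a2]
      rw [smul_add, smul_add]
      linear_combination e1 + e2
    · -- y₂ ≤ b < y₁ : split at b
      have e1 := hbase x₁ x₂ y₁ b h₁ hbIoo (by
        intro hmem; have := hmem.1; rw [min_eq_right (le_of_lt hy₁)] at this; exact lt_irrefl _ this)
      have e2 := hbase x₁ x₂ b y₂ hbIoo h₂ (by
        intro hmem; exact absurd (max_le le_rfl hy₂) (not_le.2 hmem.2))
      have a1 : (∫ y in y₁..b, G (x₂ + y*Complex.I)) + (∫ y in b..y₂, G (x₂ + y*Complex.I))
          = ∫ y in y₁..y₂, G (x₂ + y*Complex.I) :=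
        integral_add_adjacent_intervals (hsegV _ _ _ h₁ hbIoo) (hsegV _ _ _ hbIoo h₂)
      have a2 : (∫ y in y₁..b, G (x₁ + y*Complex.I)) + (∫ y in b..y₂, G (x₁ + y*Complex.I))
          = ∫ y in y₁..y₂, G (x₁ + y*Complex.I) :=
        integral_add_adjacent_intervals (hsegV _ _ _ h₁ hbIoo) (hsegV _ _ _ hbIoo h₂)
      rw [← a1, ← a2]
      rw [smul_add, smul_add]
      linear_combination e1 + e2
    · -- both above
      apply hbase x₁ x₂ y₁ y₂ h₁ h₂
      intro hmem; exact absurd (le_min (le_of_lt hy₁) (le_of_lt hy₂)) (not_le.2 hmem.1)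
  -- G is holomorphic on Ω, hence analytic
  have hGdiff : DifferentiableOn ℂ G Ω := morera_strip hAB hGc hrect
  have hGan : AnalyticOnNhd ℂ G Ω := hGdiff.analyticOnNhd hΩ
  -- Ω is preconnected (convex)
  have hconv : Convex ℝ Ω := by
    intro x hx y hy α β hα hβ hαβ
    have him : (α • x + β • y).im = α * x.im + β * y.im := by
      simp [Complex.add_im, Complex.smul_im]
    constructor
    · show A < (α • x + β • y).im
      rw [him]
      have : A = α * A + β * A := by rw [← add_mul, hαβ, one_mul]
      rw [this]
      rcases eq_or_lt_of_le hα with h | h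
      · simp [← h] at hαβ ⊢
        have hβ1 : β = 1 := by linarith
        simp [hβ1]; exact hy.1
      · rcases eq_or_lt_of_le hβ with h' | h'
        · simp [← h'] at hαβ ⊢
          have hα1 : α = 1 := by linarith
          simp [hα1] at *; exact hx.1
        · have := hx.1; have := hy.1; nlinarith
    · show (α • x + β • y).im < B
      rw [him]
      have : B = α * B + β * B := by rw [← add_mul, hαβ, one_mul]
      rw [this]
      rcases eq_or_lt_of_le hα with h | h
      · simp [← h] at hαβ ⊢
        have hβ1 : β = 1 := by linarith
        simp [hβ1]; exact hy.2
      · rcases eq_or_lt_of_le hβ with h' | h'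
        · simp [← h'] at hαβ ⊢
          have hα1 : α = 1 := by linarith
          simp [hα1] at *; exact hx.2
        · have := hx.2; have := hy.2; nlinarith
  have hpre : IsPreconnected Ω := hconv.isPreconnected
  -- point above the line where G is locally zero
  set z₀ : ℂ := ((b + B)/2 : ℝ) * Complex.I with hz₀
  have hz₀im : z₀.im = (b + B)/2 := by simp [hz₀]
  have hz₀mem : z₀ ∈ Ω := by
    simp only [hΩdef, Set.mem_setOf_eq, hz₀im]
    constructor <;> linarith
  have hev : G =ᶠ[nhds z₀] 0 := by
    have hmem : {w : ℂ | b < w.im} ∈ nhds z₀ := hup.mem_nhds (by rw [Set.mem_setOf_eq, hz₀im]; linarith)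
    filter_upwards [hmem] with w hw using hG0 w (le_of_lt hw)
  have hzero : EqOn G 0 Ω :=
    hGan.eqOn_zero_of_preconnected_of_eventuallyEq_zero hpre hz₀mem hev
  intro z h1 h2
  have : G z = 0 := hzero ⟨h1, lt_trans h2 hbB⟩
  rwa [hGg z h1 h2] at this

end Aux

open Complex intervalIntegral in
set_option maxHeartbeats 1000000 in
/-- A function which is `C¹` on the half-open strip `ℝ × (a,b]`,
harmonic in the open strip `ℝ × (a,b)`, and whose Cauchy data on the line `y = b` are
the constants `ψ = Q` and `∂ψ/∂y = c`, is the affine function `c(y−b) + Q`. -/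
theorem strip_constant_cauchy_data_affine
    (a b c Q : ℝ) (ψ : ℝ × ℝ → ℝ) (hab : a < b)
    (hdiff : ∀ p ∈ {p : ℝ × ℝ | a < p.2 ∧ p.2 ≤ b},
      DifferentiableWithinAt ℝ ψ {p : ℝ × ℝ | a < p.2 ∧ p.2 ≤ b} p)
    (hC1 : ContinuousOn (fun p => fderivWithin ℝ ψ {p : ℝ × ℝ | a < p.2 ∧ p.2 ≤ b} p)
      {p : ℝ × ℝ | a < p.2 ∧ p.2 ≤ b})
    (hC2 : ContDiffOn ℝ 2 ψ {p : ℝ × ℝ | a < p.2 ∧ p.2 < b})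
    (hharm : ∀ p ∈ {p : ℝ × ℝ | a < p.2 ∧ p.2 < b}, lap ψ p = 0)
    (htop : ∀ x : ℝ, ψ (x, b) = Q)
    (hder : ∀ x : ℝ,
      fderivWithin ℝ ψ {p : ℝ × ℝ | a < p.2 ∧ p.2 ≤ b} (x, b) (0, 1) = c) :
    ∀ p ∈ {p : ℝ × ℝ | a < p.2 ∧ p.2 ≤ b}, ψ p = c * (p.2 - b) + Q := by
  set S : Set (ℝ × ℝ) := {p : ℝ × ℝ | a < p.2 ∧ p.2 ≤ b} with hSdef
  set O : Set (ℝ × ℝ) := {p : ℝ × ℝ | a < p.2 ∧ p.2 < b} with hOdef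
  have hOS : O ⊆ S := fun p hp => ⟨hp.1, le_of_lt hp.2⟩
  have hOopen : IsOpen O := by
    have : O = Prod.snd ⁻¹' (Ioo a b) := rfl
    rw [this]; exact isOpen_Ioo.preimage continuous_snd
  have hSnhds : ∀ p ∈ O, S ∈ nhds p := fun p hp =>
    Filter.mem_of_superset (hOopen.mem_nhds hp) hOS
  set D : ℝ × ℝ → (ℝ × ℝ →L[ℝ] ℝ) := fun p => fderivWithin ℝ ψ S p with hDdef
  have hDeq : ∀ p ∈ O, D p = fderiv ℝ ψ p := fun p hp =>
    fderivWithin_of_mem_nhds (hSnhds p hp)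
  -- ψ is differentiable (in the usual sense) at points of O
  have hψdiff : ∀ p ∈ O, DifferentiableAt ℝ ψ p := fun p hp =>
    (hdiff p (hOS hp)).differentiableAt (hSnhds p hp)
  -- the boundary x-derivative vanishes
  have hDx : ∀ x : ℝ, D (x, b) (1, 0) = (0 : ℝ) := by
    intro x
    have hmem : ((x : ℝ), b) ∈ S := ⟨hab, le_refl b⟩
    have hψw : HasFDerivWithinAt ψ (D (x, b)) S (x, b) :=
      (hdiff _ hmem).hasFDerivWithinAt
    have hγ : HasDerivAt (fun t : ℝ => ((t, b) : ℝ × ℝ)) ((1 : ℝ), (0 : ℝ)) x := by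
      have h1 : HasDerivAt (fun t : ℝ => t) 1 x := hasDerivAt_id x
      have h2 : HasDerivAt (fun _ : ℝ => b) 0 x := hasDerivAt_const x b
      exact h1.prodMk h2
    have hmaps : ∀ t : ℝ, ((t, b) : ℝ × ℝ) ∈ S := fun t => ⟨hab, le_refl b⟩
    have hcomp : HasDerivAt (fun t : ℝ => ψ (t, b)) (D (x, b) (1, 0)) x := by
      have := hψw.comp_hasDerivWithinAt x (hγ.hasDerivWithinAt (s := Set.univ))
        (fun t _ => hmaps t)
      rw [hasDerivWithinAt_univ] at this
      exact this
    have hconstant : (fun t : ℝ => ψ (t, b)) = fun _ : ℝ => Q := funext htop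
    rw [hconstant] at hcomp
    have h0 : HasDerivAt (fun _ : ℝ => Q) (0 : ℝ) x := hasDerivAt_const x Q
    exact hcomp.unique h0
  -- the complex function g = ψ_x - i (ψ_y - c)
  set g : ℂ → ℂ := fun z =>
    ((D (z.re, z.im) (1, 0) : ℝ) : ℂ) - ((D (z.re, z.im) (0, 1) - c : ℝ) : ℂ) * Complex.I
    with hgdef
  -- boundary values of g vanish
  have hgbd : ∀ z : ℂ, z.im = b → g z = 0 := by
    intro z hz
    rw [hgdef]
    simp only [hz, hDx z.re, hder z.re]
    simp [hDdef, hder z.re]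
  -- continuity of g on the closed-above strip
  have hem : ∀ z : ℂ, a < z.im → z.im ≤ b → ((z.re, z.im) : ℝ × ℝ) ∈ S := fun z h1 h2 => ⟨h1, h2⟩
  have hgc : ContinuousOn g {z : ℂ | a < z.im ∧ z.im ≤ b} := by
    have hDcont : ContinuousOn (fun z : ℂ => D (z.re, z.im)) {z : ℂ | a < z.im ∧ z.im ≤ b} := by
      apply hC1.comp (by fun_prop)
      intro z hz; exact hem z hz.1 hz.2
    have h1 : ContinuousOn (fun z : ℂ => D (z.re, z.im) (1, 0)) {z : ℂ | a < z.im ∧ z.im ≤ b} :=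
      hDcont.clm_apply continuousOn_const
    have h2 : ContinuousOn (fun z : ℂ => D (z.re, z.im) (0, 1)) {z : ℂ | a < z.im ∧ z.im ≤ b} :=
      hDcont.clm_apply continuousOn_const
    rw [hgdef]
    apply ContinuousOn.sub
    · exact Complex.continuous_ofReal.comp_continuousOn h1
    · exact (Complex.continuous_ofReal.comp_continuousOn (h2.sub continuousOn_const)).mul
        continuousOn_const
  -- complex differentiability of g in the open strip
  have hgd : ∀ z : ℂ, a < z.im → z.im < b → DifferentiableAt ℂ g z := by
    intro z h1 h2
    set p : ℝ × ℝ := (z.re, z.im) with hpdef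
    have hp : p ∈ O := ⟨h1, h2⟩
    -- second derivative
    have hψ2 : ContDiffAt ℝ 2 ψ p := (hC2 p hp).contDiffAt (hOopen.mem_nhds hp)
    have hf1 : ContDiffAt ℝ 1 (fderiv ℝ ψ) p := hψ2.fderiv_right (by norm_num)
    have hfd : DifferentiableAt ℝ (fderiv ℝ ψ) p := hf1.differentiableAt (by norm_num)
    set A2 : (ℝ × ℝ) →L[ℝ] ((ℝ × ℝ) →L[ℝ] ℝ) := fderiv ℝ (fderiv ℝ ψ) p with hA2def
    have hA2 : HasFDerivAt (fderiv ℝ ψ) A2 p := hfd.hasFDerivAt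
    have hev : ∀ᶠ q in nhds p, HasFDerivAt ψ (fderiv ℝ ψ q) q := by
      filter_upwards [hOopen.mem_nhds hp] with q hq using (hψdiff q hq).hasFDerivAt
    have hsymm : ∀ v w : ℝ × ℝ, A2 v w = A2 w v := fun v w =>
      second_derivative_symmetric_of_eventually hev hA2 v w
    -- harmonicity in terms of A2
    have hfderiv_eval : ∀ v : ℝ × ℝ,
        fderiv ℝ (fun q => fderiv ℝ ψ q v) p = (ContinuousLinearMap.apply ℝ ℝ v).comp A2 := by
      intro v
      have : HasFDerivAt (fun q => fderiv ℝ ψ q v)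
          ((ContinuousLinearMap.apply ℝ ℝ v).comp A2) p :=
        (ContinuousLinearMap.apply ℝ ℝ v).hasFDerivAt.comp p hA2
      exact this.fderiv
    have hharm' : A2 (1, 0) (1, 0) + A2 (0, 1) (0, 1) = 0 := by
      have := hharm p hp
      rw [lap] at this
      rw [hfderiv_eval (1,0), hfderiv_eval (0,1)] at this
      simpa using this
    -- real differentiability of the fderiv-version g₀ of g
    set E : ℂ →L[ℝ] ℝ × ℝ := Complex.equivRealProdCLM.toContinuousLinearMap with hEdef
    have hEapp : ∀ w : ℂ, E w = (w.re, w.im) := fun w => rfl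
    have hDψ : HasFDerivAt (fun w : ℂ => fderiv ℝ ψ (w.re, w.im)) (A2.comp E) z := by
      have hE : HasFDerivAt (fun w : ℂ => ((w.re, w.im) : ℝ × ℝ)) E z := E.hasFDerivAt
      exact hA2.comp z hE
    have hu : HasFDerivAt (fun w : ℂ => fderiv ℝ ψ (w.re, w.im) (1, 0))
        ((ContinuousLinearMap.apply ℝ ℝ ((1:ℝ), (0:ℝ))).comp (A2.comp E)) z :=
      (ContinuousLinearMap.apply ℝ ℝ ((1:ℝ), (0:ℝ))).hasFDerivAt.comp z hDψ
    have hv : HasFDerivAt (fun w : ℂ => fderiv ℝ ψ (w.re, w.im) (0, 1))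
        ((ContinuousLinearMap.apply ℝ ℝ ((0:ℝ), (1:ℝ))).comp (A2.comp E)) z :=
      (ContinuousLinearMap.apply ℝ ℝ ((0:ℝ), (1:ℝ))).hasFDerivAt.comp z hDψ
    set U' : ℂ →L[ℝ] ℝ := (ContinuousLinearMap.apply ℝ ℝ ((1:ℝ), (0:ℝ))).comp (A2.comp E) with hU'
    set V' : ℂ →L[ℝ] ℝ := (ContinuousLinearMap.apply ℝ ℝ ((0:ℝ), (1:ℝ))).comp (A2.comp E) with hV'
    set g₀ : ℂ → ℂ := fun w =>
      ((fderiv ℝ ψ (w.re, w.im) (1, 0) : ℝ) : ℂ)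
        - ((fderiv ℝ ψ (w.re, w.im) (0, 1) - c : ℝ) : ℂ) * Complex.I with hg₀def
    set L : ℂ →L[ℝ] ℂ :=
      Complex.ofRealCLM.comp U' - Complex.I • (Complex.ofRealCLM.comp V') with hLdef
    have hL : HasFDerivAt g₀ L z := by
      have h1 : HasFDerivAt (fun w : ℂ => ((fderiv ℝ ψ (w.re, w.im) (1, 0) : ℝ) : ℂ))
          (Complex.ofRealCLM.comp U') z := Complex.ofRealCLM.hasFDerivAt.comp z hu
      have h2 : HasFDerivAt (fun w : ℂ => ((fderiv ℝ ψ (w.re, w.im) (0, 1) - c : ℝ) : ℂ))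
          (Complex.ofRealCLM.comp V') z := Complex.ofRealCLM.hasFDerivAt.comp z (hv.sub_const c)
      have h3 := h2.mul_const Complex.I
      exact h1.sub h3
    -- evaluation of L
    have hLeval : ∀ w : ℂ, L w = ((A2 (w.re, w.im) (1, 0) : ℝ) : ℂ)
        - Complex.I * ((A2 (w.re, w.im) (0, 1) : ℝ) : ℂ) := by
      intro w
      rw [hLdef]
      simp [hU', hV', hEapp, smul_eq_mul]
    -- Cauchy-Riemann: L is complex linear
    set d : ℂ := L 1 with hddef
    have hLI : L Complex.I = Complex.I * L 1 := by
      rw [hLeval, hLeval]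
      simp only [Complex.I_re, Complex.I_im, Complex.one_re, Complex.one_im]
      have e1 : A2 ((0:ℝ), (1:ℝ)) ((1:ℝ), (0:ℝ)) = A2 ((1:ℝ), (0:ℝ)) ((0:ℝ), (1:ℝ)) := hsymm _ _
      have e2 : A2 ((0:ℝ), (1:ℝ)) ((0:ℝ), (1:ℝ)) = -A2 ((1:ℝ), (0:ℝ)) ((1:ℝ), (0:ℝ)) := by
        linarith [hharm']
      rw [e1, e2]
      rw [Complex.ext_iff]
      constructor <;> simp
    have hrs : (ContinuousLinearMap.smulRight (1 : ℂ →L[ℂ] ℂ) d).restrictScalars ℝ = L := by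
      apply ContinuousLinearMap.ext
      intro w
      have hstep : ((w.re : ℂ) + (w.im : ℂ) * Complex.I) * L 1
          = (w.re : ℝ) • L 1 + (w.im : ℝ) • L Complex.I := by
        rw [hLI]
        simp only [Complex.real_smul]
        ring
      have hw2 : L w = (w.re : ℝ) • L 1 + (w.im : ℝ) • L Complex.I := by
        conv_lhs => rw [← Complex.re_add_im w]
        rw [show ((w.re : ℂ) + (w.im : ℂ) * Complex.I)
            = (w.re : ℝ) • (1:ℂ) + (w.im : ℝ) • Complex.I by
          simp [Complex.real_smul]]
        rw [map_add, map_smul, map_smul]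
      have hgoal : w • d = L w := by
        calc w • d = w * L 1 := by rw [smul_eq_mul, hddef]
          _ = ((w.re : ℂ) + (w.im : ℂ) * Complex.I) * L 1 := by rw [Complex.re_add_im]
          _ = (w.re : ℝ) • L 1 + (w.im : ℝ) • L Complex.I := hstep
          _ = L w := hw2.symm
      simpa using hgoal
    have hg₀d : HasFDerivAt g₀ (ContinuousLinearMap.smulRight (1 : ℂ →L[ℂ] ℂ) d) z :=
      hasFDerivAt_of_restrictScalars ℝ hL hrs
    have hg₀diff : DifferentiableAt ℂ g₀ z := hg₀d.differentiableAt
    -- g agrees with g₀ near z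
    have hOc : IsOpen {w : ℂ | a < w.im ∧ w.im < b} := by
      have : {w : ℂ | a < w.im ∧ w.im < b} = Complex.im ⁻¹' (Ioo a b) := rfl
      rw [this]; exact isOpen_Ioo.preimage Complex.continuous_im
    have heq : g =ᶠ[nhds z] g₀ := by
      filter_upwards [hOc.mem_nhds ⟨h1, h2⟩] with w hw
      have : D (w.re, w.im) = fderiv ℝ ψ (w.re, w.im) := hDeq _ ⟨hw.1, hw.2⟩
      simp only [hgdef, hg₀def, this]
    exact heq.differentiableAt_iff.2 hg₀diff
  -- apply the unique continuation result
  have hgzero : ∀ z : ℂ, a < z.im → z.im < b → g z = 0 := strip_zero hab hgc hgd hgbd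
  -- deduce that the derivatives of ψ are (0, c) on O
  have hDO : ∀ p ∈ O, D p (1, 0) = 0 ∧ D p (0, 1) = c := by
    intro p hp
    have hz := hgzero ((p.1 : ℂ) + (p.2 : ℂ) * Complex.I)
      (by simpa using hp.1) (by simpa using hp.2)
    simp only [hgdef, Complex.add_re, Complex.ofReal_re, Complex.mul_re, Complex.ofReal_im,
      Complex.I_re, Complex.I_im, Complex.add_im, Complex.mul_im] at hz
    ring_nf at hz
    rw [Complex.ext_iff] at hz
    simp at hz
    obtain ⟨hz1, hz2⟩ := hz
    refine ⟨by simpa using hz1, by linarith [hz2]⟩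
  -- χ = ψ - c y is (locally) constant on O
  set χ : ℝ × ℝ → ℝ := fun p => ψ p - c * p.2 with hχdef
  have hconvO : Convex ℝ O := by
    have : O = Prod.snd ⁻¹' (Ioo a b) := rfl
    rw [this]
    exact (convex_Ioo a b).linear_preimage (LinearMap.snd ℝ ℝ ℝ)
  have hχderiv : ∀ p ∈ O, HasFDerivWithinAt χ (0 : ℝ × ℝ →L[ℝ] ℝ) O p := by
    intro p hp
    have hψp : HasFDerivAt ψ (D p) p := by
      rw [hDeq p hp]; exact (hψdiff p hp).hasFDerivAt
    have hsnd : HasFDerivAt (fun q : ℝ × ℝ => c * q.2)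
        (c • (ContinuousLinearMap.snd ℝ ℝ ℝ)) p :=
      (ContinuousLinearMap.snd ℝ ℝ ℝ).hasFDerivAt.const_mul c
    have hχp : HasFDerivAt χ (D p - c • (ContinuousLinearMap.snd ℝ ℝ ℝ)) p := hψp.sub hsnd
    have hzero : D p - c • (ContinuousLinearMap.snd ℝ ℝ ℝ) = 0 := by
      obtain ⟨e1, e2⟩ := hDO p hp
      apply ContinuousLinearMap.ext
      intro v
      have hv : v = v.1 • ((1:ℝ), (0:ℝ)) + v.2 • ((0:ℝ), (1:ℝ)) := by
        ext <;> simp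
      rw [hv]
      simp only [map_add, map_smul, ContinuousLinearMap.sub_apply,
        ContinuousLinearMap.smul_apply, ContinuousLinearMap.coe_snd', ContinuousLinearMap.zero_apply]
      simp [e1, e2]
    rw [hzero] at hχp
    exact hχp.hasFDerivWithinAt
  have hχconst : ∀ p ∈ O, ∀ p' ∈ O, χ p = χ p' := by
    intro p hp p' hp'
    have := hconvO.norm_image_sub_le_of_norm_hasFDerivWithin_le
      (f' := fun _ => (0 : ℝ × ℝ →L[ℝ] ℝ)) (C := 0) hχderiv
      (fun q _ => by simp) hp hp'
    have h0 : ‖χ p' - χ p‖ ≤ 0 := by simpa using this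
    have := norm_nonneg (χ p' - χ p)
    have : χ p' - χ p = 0 := by
      apply norm_eq_zero.1; linarith
    linarith [sub_eq_zero.1 this]
  -- the boundary limit: χ = Q - c b on O
  have hχval : ∀ p ∈ O, χ p = Q - c * b := by
    intro p hp
    set x := p.1 with hx
    -- approach (x, b) from below within O
    have hbmem : ((x : ℝ), b) ∈ S := ⟨hab, le_refl b⟩
    have hχcont : ContinuousWithinAt χ S (x, b) := by
      apply ContinuousWithinAt.sub
      · exact (hdiff _ hbmem).continuousWithinAt
      · exact (continuous_const.mul continuous_snd).continuousWithinAt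
    have hmap : Tendsto (fun t : ℝ => ((x, t) : ℝ × ℝ)) (nhdsWithin b (Ioo a b))
        (nhdsWithin ((x : ℝ), b) S) := by
      rw [tendsto_nhdsWithin_iff]
      constructor
      · apply Tendsto.mono_left _ nhdsWithin_le_nhds
        exact (Continuous.prodMk continuous_const continuous_id).tendsto b
      · filter_upwards [self_mem_nhdsWithin] with t ht
        exact ⟨ht.1, le_of_lt ht.2⟩
    have hne : (nhdsWithin b (Ioo a b)).NeBot := right_nhdsWithin_Ioo_neBot hab
    have h1 : Tendsto (fun t : ℝ => χ (x, t)) (nhdsWithin b (Ioo a b))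
        (nhds (χ (x, b))) := hχcont.tendsto.comp hmap
    have h2 : Tendsto (fun t : ℝ => χ (x, t)) (nhdsWithin b (Ioo a b))
        (nhds (χ p)) := by
      apply Tendsto.congr' _ tendsto_const_nhds
      filter_upwards [self_mem_nhdsWithin] with t ht
      exact hχconst p hp ((x, t)) ⟨ht.1, ht.2⟩
    have hval : χ (x, b) = Q - c * b := by
      rw [hχdef]; simp only [htop x]
    rw [← hval]
    exact tendsto_nhds_unique h2 h1
  -- conclude
  intro p hp
  rcases lt_or_eq_of_le hp.2 with h | h
  · have := hχval p ⟨hp.1, h⟩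
    rw [hχdef] at this
    simp at this
    linarith
  · have h2 : ψ p = Q := by
      have : ψ (p.1, p.2) = Q := by rw [h]; exact htop p.1
      simpa using this
    rw [h2, h]
    ring
end

section
/- Let g > 0, β₀ < β₁, λ ≥ g β₁, and Q ∈ ℝ. Then there is no function ψ : ℝ × [β₀,β₁] → ℝ that is continuously differentiable on ℝ × [β₀,β₁], harmonic (ψ_xx + ψ_yy = 0) in the open strip ℝ × (β₀,β₁), and satisfies the overdetermined boundary conditions ψ(x,β₀) = 0, ∂ψ/∂y (x,β₀) = √(2λ−2gβ₀), ψ(x,β₁) = Q, and ∂ψ/∂y (x,β₁) = √(2λ−2gβ₁) for all x ∈ ℝ. -/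
open Set Filter

open Complex intervalIntegral MeasureTheory Topology

section Auxiliary

/-- If `h` is complex-differentiable at `conj z + c`, then `w ↦ conj (h (conj w + c))`
is complex-differentiable at `z`. -/
lemma differentiableAt_conj_comp_conj {h : ℂ → ℂ} {c z : ℂ}
    (hd : DifferentiableAt ℂ h ((starRingEnd ℂ) z + c)) :
    DifferentiableAt ℂ (fun w => (starRingEnd ℂ) (h ((starRingEnd ℂ) w + c))) z := by
  set p := (starRingEnd ℂ) z + c with hp
  set d := deriv h p with hdd
  have hD : HasFDerivAt h (((1 : ℂ →L[ℂ] ℂ).smulRight d).restrictScalars ℝ) p :=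
    (hd.hasDerivAt.hasFDerivAt).restrictScalars ℝ
  have hinner : HasFDerivAt (fun w : ℂ => (starRingEnd ℂ) w + c)
      (Complex.conjCLE : ℂ →L[ℝ] ℂ) z := by
    have := (Complex.conjCLE.hasFDerivAt (x := z)).add_const c
    simpa using this
  have h2 : HasFDerivAt (fun w : ℂ => h ((starRingEnd ℂ) w + c))
      ((((1 : ℂ →L[ℂ] ℂ).smulRight d).restrictScalars ℝ).comp
        (Complex.conjCLE : ℂ →L[ℝ] ℂ)) z := by
    have := hD.comp z hinner
    exact this
  have h3 : HasFDerivAt (fun w : ℂ => (starRingEnd ℂ) (h ((starRingEnd ℂ) w + c)))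
      ((Complex.conjCLE : ℂ →L[ℝ] ℂ).comp
        ((((1 : ℂ →L[ℂ] ℂ).smulRight d).restrictScalars ℝ).comp
          (Complex.conjCLE : ℂ →L[ℝ] ℂ))) z := by
    have := (Complex.conjCLE.hasFDerivAt (x := h ((starRingEnd ℂ) z + c))).comp z h2
    exact this
  have hres : ((1 : ℂ →L[ℂ] ℂ).smulRight ((starRingEnd ℂ) d)).restrictScalars ℝ
      = (Complex.conjCLE : ℂ →L[ℝ] ℂ).comp
        ((((1 : ℂ →L[ℂ] ℂ).smulRight d).restrictScalars ℝ).comp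
          (Complex.conjCLE : ℂ →L[ℝ] ℂ)) := by
    apply ContinuousLinearMap.ext
    intro w
    simp [ContinuousLinearMap.smulRight_apply, Complex.conjCLE_apply, smul_eq_mul, map_mul]
  exact (hasFDerivAt_of_restrictScalars ℝ h3 hres).differentiableAt


/-- Schwarz-reflection style uniqueness: a function continuous on the closed strip,
holomorphic in the open strip, vanishing on the bottom boundary line, vanishes. -/
lemma strip_zero_s13 (β₀ β₁ : ℝ) (hβ : β₀ < β₁) (h : ℂ → ℂ)
    (hcont : ContinuousOn h {z : ℂ | β₀ ≤ z.im ∧ z.im ≤ β₁})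
    (hdiff : ∀ z : ℂ, β₀ < z.im → z.im < β₁ → DifferentiableAt ℂ h z)
    (hbot : ∀ x : ℝ, h (x + β₀ * I) = 0) :
    ∀ z : ℂ, β₀ ≤ z.im → z.im ≤ β₁ → h z = 0 := by
  set d := β₁ - β₀ with hd
  have hd0 : 0 < d := sub_pos.2 hβ
  set U : Set ℂ := {z : ℂ | β₀ - d < z.im ∧ z.im < β₁} with hUdef
  have hU : IsOpen U := by
    have : U = Complex.im ⁻¹' Ioo (β₀ - d) β₁ := rfl
    rw [this]
    exact isOpen_Ioo.preimage Complex.continuous_im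
  classical
  set H : ℂ → ℂ := fun z => if β₀ ≤ z.im then h z else
    (starRingEnd ℂ) (h ((starRingEnd ℂ) z + ((2*β₀ : ℝ) : ℂ) * I)) with hHdef
  -- basic facts
  have him : ∀ z : ℂ, ((starRingEnd ℂ) z + ((2*β₀ : ℝ) : ℂ) * I).im = 2*β₀ - z.im := by
    intro z; simp; ring
  have hrefl_mem : ∀ z : ℂ, z.im ≤ β₀ → β₀ - d < z.im →
      β₀ ≤ ((starRingEnd ℂ) z + ((2*β₀ : ℝ) : ℂ) * I).im ∧ ((starRingEnd ℂ) z + ((2*β₀ : ℝ) : ℂ) * I).im ≤ β₁ := by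
    intro z h1 h2
    rw [him]
    constructor <;> linarith
  have HA : ∀ z : ℂ, β₀ ≤ z.im → H z = h z := by
    intro z hz; simp [hHdef, hz]
  have Hline : ∀ x : ℝ, H ((x : ℂ) + β₀ * I) = 0 := by
    intro x
    rw [HA _ (by simp), hbot]
  have hSclosed : IsClosed {z : ℂ | β₀ ≤ z.im} :=
    isClosed_le continuous_const Complex.continuous_im
  have hfr : ∀ a : ℂ, a ∈ frontier {z : ℂ | β₀ ≤ z.im} → a.im = β₀ := by
    intro a ha
    rw [frontier_eq_closure_inter_closure] at ha
    have h1 : β₀ ≤ a.im := hSclosed.closure_subset ha.1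
    have h2 : a.im ≤ β₀ := by
      have : closure {z : ℂ | β₀ ≤ z.im}ᶜ ⊆ {z : ℂ | z.im ≤ β₀} := by
        apply closure_minimal
        · intro w hw
          simp only [mem_compl_iff, mem_setOf_eq, not_le] at hw
          exact le_of_lt hw
        · exact isClosed_le Complex.continuous_im continuous_const
      exact this ha.2
    linarith
  have hfix : ∀ a : ℂ, a.im = β₀ → (starRingEnd ℂ) a + ((2*β₀ : ℝ) : ℂ) * I = a := by
    intro a ha
    apply Complex.ext <;> simp [ha] <;> ring
  have haval : ∀ a : ℂ, a.im = β₀ → h a = 0 := by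
    intro a ha
    have : a = (a.re : ℂ) + (β₀ : ℂ) * I := by
      apply Complex.ext <;> simp [ha]
    rw [this]
    exact hbot a.re
  have Hcont : ContinuousOn H U := by
    apply ContinuousOn.if
    · intro a ha
      have haim : a.im = β₀ := hfr a ha.2
      rw [hfix a haim, haval a haim]
      simp
    · apply hcont.mono
      intro w hw
      have h1 : β₀ ≤ w.im := hSclosed.closure_subset hw.2
      exact ⟨h1, le_of_lt hw.1.2⟩
    · have hinner : Continuous fun z : ℂ => (starRingEnd ℂ) z + ((2*β₀ : ℝ) : ℂ) * I := by
        continuity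
      apply (Complex.continuous_conj.comp_continuousOn ?_)
      apply hcont.comp hinner.continuousOn
      intro w hw
      have h2 : w.im ≤ β₀ := by
        have : closure {z : ℂ | ¬ β₀ ≤ z.im} ⊆ {z : ℂ | z.im ≤ β₀} := by
          apply closure_minimal
          · intro u hu
            simp only [mem_setOf_eq, not_le] at hu
            exact le_of_lt hu
          · exact isClosed_le Complex.continuous_im continuous_const
        exact this hw.2
      exact hrefl_mem w h2 hw.1.1
  have Hdiff : ∀ z ∈ U, z.im ≠ β₀ → DifferentiableAt ℂ H z := by
    intro z hz hne
    rcases lt_or_gt_of_ne hne with hlt | hgt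
    · -- reflected side
      have hev : H =ᶠ[nhds z]
          (fun w => (starRingEnd ℂ) (h ((starRingEnd ℂ) w + ((2*β₀ : ℝ) : ℂ) * I))) := by
        have hop : IsOpen {w : ℂ | w.im < β₀} := isOpen_lt Complex.continuous_im continuous_const
        filter_upwards [hop.mem_nhds hlt] with w hw
        simp only [hHdef, not_le.2 hw, if_false]
      have hdf : DifferentiableAt ℂ
          (fun w => (starRingEnd ℂ) (h ((starRingEnd ℂ) w + ((2*β₀ : ℝ) : ℂ) * I))) z := by
        apply differentiableAt_conj_comp_conj
        apply hdiff
        · rw [him]; linarith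
        · rw [him]; linarith [hz.1]
      exact hdf.congr_of_eventuallyEq hev
    · -- upper side
      have hev : H =ᶠ[nhds z] h := by
        have hop : IsOpen {w : ℂ | β₀ < w.im} := isOpen_lt continuous_const Complex.continuous_im
        filter_upwards [hop.mem_nhds hgt] with w hw
        exact HA w (le_of_lt hw)
      exact (hdiff z hgt hz.2).congr_of_eventuallyEq hev
  -- integrability of H on horizontal and vertical segments inside U
  have Hint_h : ∀ y : ℝ, β₀ - d < y → y < β₁ → ∀ x₁ x₂ : ℝ,
      IntervalIntegrable (fun t : ℝ => H ((t : ℂ) + y * I)) volume x₁ x₂ := by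
    intro y hy1 hy2 x₁ x₂
    apply ContinuousOn.intervalIntegrable
    apply Hcont.comp (Continuous.continuousOn
      (Complex.continuous_ofReal.add continuous_const))
    intro t _
    show ((t : ℂ) + (y : ℂ) * I) ∈ U
    constructor <;> simp [hy1, hy2]
  have Hint_v : ∀ x y₁ y₂ : ℝ, y₁ ∈ Ioo (β₀ - d) β₁ → y₂ ∈ Ioo (β₀ - d) β₁ →
      IntervalIntegrable (fun s : ℝ => H ((x : ℂ) + s * I)) volume y₁ y₂ := by
    intro x y₁ y₂ hy1 hy2
    apply ContinuousOn.intervalIntegrable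
    apply Hcont.comp (Continuous.continuousOn
      (continuous_const.add (Complex.continuous_ofReal.mul continuous_const)))
    intro s hs
    show ((x : ℂ) + (s : ℂ) * I) ∈ U
    have : s ∈ Ioo (β₀ - d) β₁ := Set.ordConnected_Ioo.uIcc_subset hy1 hy2 hs
    constructor <;> simp [this.1, this.2]
  -- the rectangle identity: the two L-shaped path integrals from β₀ I to z agree
  have rect : ∀ z ∈ U,
      (∫ t in (0:ℝ)..z.re, H ((t : ℂ) + β₀ * I)) + I * (∫ s in β₀..z.im, H ((z.re : ℂ) + s * I))
        = I * (∫ s in β₀..z.im, H (((0:ℝ) : ℂ) + s * I))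
          + ∫ t in (0:ℝ)..z.re, H ((t : ℂ) + z.im * I) := by
    intro z hz
    have hsub : Set.uIcc β₀ z.im ⊆ Ioo (β₀ - d) β₁ :=
      Set.ordConnected_Ioo.uIcc_subset ⟨by linarith, hβ⟩ ⟨hz.1, hz.2⟩
    have hre0 : ((β₀ : ℂ) * I).re = 0 := by simp
    have him0 : ((β₀ : ℂ) * I).im = β₀ := by simp
    have h0 := Complex.integral_boundary_rect_eq_zero_of_continuousOn_of_differentiableOn H
      ((β₀ : ℂ) * I) z ?_ ?_
    · rw [hre0, him0] at h0
      simp only [smul_eq_mul, Complex.ofReal_zero] at h0 ⊢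
      linear_combination h0
    · apply Hcont.mono
      intro w hw
      rw [Complex.mem_reProdIm] at hw
      have := hw.2
      rw [him0] at this
      exact hsub this
    · intro w hw
      rw [Complex.mem_reProdIm] at hw
      have h1 : w.im ∈ Ioo (min ((β₀ : ℂ) * I).im z.im) (max ((β₀ : ℂ) * I).im z.im) := hw.2
      rw [him0] at h1
      have hmem : w.im ∈ Set.uIcc β₀ z.im :=
        ⟨le_of_lt h1.1, le_of_lt h1.2⟩
      have hwU : w ∈ U := hsub hmem
      have hne : w.im ≠ β₀ := by
        rcases le_total β₀ z.im with hc | hc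
        · have : min β₀ z.im = β₀ := min_eq_left hc
          rw [this] at h1
          exact ne_of_gt h1.1
        · have : max β₀ z.im = β₀ := max_eq_left hc
          rw [this] at h1
          exact ne_of_lt h1.2
      exact (Hdiff w hwU hne).differentiableWithinAt
  set F : ℂ → ℂ := fun z =>
    (∫ t in (0:ℝ)..z.re, H ((t : ℂ) + β₀ * I)) + I * (∫ s in β₀..z.im, H ((z.re : ℂ) + s * I))
    with hFdef
  have Fderiv : ∀ z ∈ U, HasDerivAt F (H z) z := by
    intro z hz
    rw [hasDerivAt_iff_isLittleO, Asymptotics.isLittleO_iff]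
    intro c hc
    obtain ⟨δ₁, hδ₁pos, hδ₁⟩ := Metric.isOpen_iff.1 hU z hz
    have hctsz : ContinuousAt H z := Hcont.continuousAt (hU.mem_nhds hz)
    obtain ⟨δ₂, hδ₂pos, hδ₂⟩ := Metric.continuousAt_iff.1 hctsz (c/2) (by linarith)
    set δ := min δ₁ δ₂ / 2 with hδdef
    have hδpos : 0 < δ := by positivity
    rw [Metric.eventually_nhds_iff]
    refine ⟨δ, hδpos, ?_⟩
    intro z' hz'dist
    have hδle1 : δ ≤ δ₁ := by
      rw [hδdef]; have := min_le_left δ₁ δ₂; linarith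
    have hδle2 : 2 * δ ≤ δ₂ := by
      rw [hδdef]; have := min_le_right δ₁ δ₂; linarith
    have hz'U : z' ∈ U := hδ₁ (Metric.mem_ball.2 (lt_of_lt_of_le hz'dist hδle1))
    have hmidim : ((z'.re : ℂ) + (z.im : ℂ) * I).im = z.im := by simp
    have hmidre : ((z'.re : ℂ) + (z.im : ℂ) * I).re = z'.re := by simp
    have hmidU : ((z'.re : ℂ) + (z.im : ℂ) * I) ∈ U := by
      refine ⟨?_, ?_⟩ <;> rw [hmidim]
      · exact hz.1
      · exact hz.2
    have hβIoo : β₀ ∈ Ioo (β₀ - d) β₁ := ⟨by linarith, hβ⟩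
    have hzIoo : z.im ∈ Ioo (β₀ - d) β₁ := ⟨hz.1, hz.2⟩
    have hz'Ioo : z'.im ∈ Ioo (β₀ - d) β₁ := ⟨hz'U.1, hz'U.2⟩
    -- step 1: difference formula
    have e1 : F z' - F ((z'.re : ℂ) + (z.im : ℂ) * I)
        = I * ∫ s in z.im..z'.im, H ((z'.re : ℂ) + s * I) := by
      have hsub := intervalIntegral.integral_interval_sub_left
        (Hint_v z'.re β₀ z'.im hβIoo hz'Ioo) (Hint_v z'.re β₀ z.im hβIoo hzIoo)
      simp only [hFdef, hmidre, hmidim]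
      rw [← hsub]
      ring
    have e2 : F ((z'.re : ℂ) + (z.im : ℂ) * I) - F z
        = ∫ t in z.re..z'.re, H ((t : ℂ) + z.im * I) := by
      have k1 := rect _ hmidU
      have k2 := rect z hz
      rw [hmidre, hmidim] at k1
      have hsub := intervalIntegral.integral_interval_sub_left
        (Hint_h z.im hz.1 hz.2 0 z'.re) (Hint_h z.im hz.1 hz.2 0 z.re)
      simp only [hFdef, hmidre, hmidim] at k1 k2 ⊢
      rw [k1, k2, ← hsub]
      ring
    have hdiffF : F z' - F z = (∫ t in z.re..z'.re, H ((t : ℂ) + z.im * I))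
        + I * ∫ s in z.im..z'.im, H ((z'.re : ℂ) + s * I) := by
      linear_combination e1 + e2
    -- step 2: subtract the constant
    have i1 : (∫ t in z.re..z'.re, (H ((t : ℂ) + z.im * I) - H z))
        = (∫ t in z.re..z'.re, H ((t : ℂ) + z.im * I)) - ((z'.re - z.re : ℝ) : ℂ) * H z := by
      rw [intervalIntegral.integral_sub (Hint_h z.im hz.1 hz.2 _ _) intervalIntegrable_const,
        intervalIntegral.integral_const]
      simp [Complex.real_smul]
    have i2 : (∫ s in z.im..z'.im, (H ((z'.re : ℂ) + s * I) - H z))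
        = (∫ s in z.im..z'.im, H ((z'.re : ℂ) + s * I)) - ((z'.im - z.im : ℝ) : ℂ) * H z := by
      rw [intervalIntegral.integral_sub (Hint_v z'.re z.im z'.im hzIoo hz'Ioo)
        intervalIntegrable_const, intervalIntegral.integral_const]
      simp [Complex.real_smul]
    have hzz : z' - z = ((z'.re - z.re : ℝ) : ℂ) + ((z'.im - z.im : ℝ) : ℂ) * I := by
      apply Complex.ext <;> simp
    have key2 : F z' - F z - (z' - z) • H z
        = (∫ t in z.re..z'.re, (H ((t : ℂ) + z.im * I) - H z))
          + I * (∫ s in z.im..z'.im, (H ((z'.re : ℂ) + s * I) - H z)) := by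
      rw [smul_eq_mul, i1, i2, hdiffF, hzz]
      ring
    -- step 3: estimates
    have hrele : |z'.re - z.re| ≤ dist z' z := by
      rw [Complex.dist_eq]
      exact Complex.abs_re_le_norm (z' - z) |>.trans_eq' (by simp [Complex.sub_re])
    have himle : |z'.im - z.im| ≤ dist z' z := by
      rw [Complex.dist_eq]
      exact Complex.abs_im_le_norm (z' - z) |>.trans_eq' (by simp [Complex.sub_im])
    have hb1 : ‖∫ t in z.re..z'.re, (H ((t : ℂ) + z.im * I) - H z)‖ ≤ c/2 * |z'.re - z.re| := by
      apply intervalIntegral.norm_integral_le_of_norm_le_const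
      intro t ht
      have ht' : |t - z.re| ≤ |z'.re - z.re| := by
        have h1 := le_abs_self (z'.re - z.re)
        have h2 := neg_abs_le (z'.re - z.re)
        rw [abs_sub_le_iff]
        rcases Set.mem_uIoc.1 ht with h' | h' <;>
          exact ⟨by linarith [h'.1, h'.2], by linarith [h'.1, h'.2]⟩
      have hdw : dist ((t : ℂ) + z.im * I) z < δ₂ := by
        have : dist ((t : ℂ) + z.im * I) z = |t - z.re| := by
          rw [Complex.dist_eq]
          have : (t : ℂ) + (z.im : ℂ) * I - z = ((t - z.re : ℝ) : ℂ) := by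
            apply Complex.ext <;> simp
          rw [this, Complex.norm_real, Real.norm_eq_abs]
        rw [this]
        calc |t - z.re| ≤ |z'.re - z.re| := ht'
          _ ≤ dist z' z := hrele
          _ < δ := hz'dist
          _ ≤ δ₂ := by linarith
      have := hδ₂ hdw
      rw [dist_eq_norm] at this
      exact le_of_lt this
    have hb2 : ‖∫ s in z.im..z'.im, (H ((z'.re : ℂ) + s * I) - H z)‖ ≤ c/2 * |z'.im - z.im| := by
      apply intervalIntegral.norm_integral_le_of_norm_le_const
      intro s hs
      have hs' : |s - z.im| ≤ |z'.im - z.im| := by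
        have h1 := le_abs_self (z'.im - z.im)
        have h2 := neg_abs_le (z'.im - z.im)
        rw [abs_sub_le_iff]
        rcases Set.mem_uIoc.1 hs with h' | h' <;>
          exact ⟨by linarith [h'.1, h'.2], by linarith [h'.1, h'.2]⟩
      have hdw : dist ((z'.re : ℂ) + s * I) z < δ₂ := by
        have hwz : (z'.re : ℂ) + (s : ℂ) * I - z
            = ((z'.re - z.re : ℝ) : ℂ) + ((s - z.im : ℝ) : ℂ) * I := by
          apply Complex.ext <;> simp
        have : dist ((z'.re : ℂ) + s * I) z ≤ |z'.re - z.re| + |s - z.im| := by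
          rw [Complex.dist_eq, hwz]
          refine (norm_add_le _ _).trans ?_
          rw [norm_mul, Complex.norm_I, mul_one, Complex.norm_real, Complex.norm_real, Real.norm_eq_abs, Real.norm_eq_abs]
        calc dist ((z'.re : ℂ) + s * I) z ≤ |z'.re - z.re| + |s - z.im| := this
          _ ≤ dist z' z + dist z' z := add_le_add hrele (hs'.trans himle)
          _ < δ + δ := by linarith
          _ ≤ δ₂ := by linarith
      have := hδ₂ hdw
      rw [dist_eq_norm] at this
      exact le_of_lt this
    rw [key2]
    calc ‖(∫ t in z.re..z'.re, (H ((t : ℂ) + z.im * I) - H z))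
          + I * (∫ s in z.im..z'.im, (H ((z'.re : ℂ) + s * I) - H z))‖
        ≤ ‖∫ t in z.re..z'.re, (H ((t : ℂ) + z.im * I) - H z)‖
          + ‖I * (∫ s in z.im..z'.im, (H ((z'.re : ℂ) + s * I) - H z))‖ := norm_add_le _ _
      _ = ‖∫ t in z.re..z'.re, (H ((t : ℂ) + z.im * I) - H z)‖
          + ‖∫ s in z.im..z'.im, (H ((z'.re : ℂ) + s * I) - H z)‖ := by
          rw [norm_mul, Complex.norm_I, one_mul]
      _ ≤ c/2 * |z'.re - z.re| + c/2 * |z'.im - z.im| := add_le_add hb1 hb2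
      _ ≤ c/2 * ‖z' - z‖ + c/2 * ‖z' - z‖ := by
          have h1 : |z'.re - z.re| ≤ ‖z' - z‖ := by rw [dist_eq_norm] at hrele; exact hrele
          have h2 : |z'.im - z.im| ≤ ‖z' - z‖ := by rw [dist_eq_norm] at himle; exact himle
          have hc2 : (0:ℝ) ≤ c/2 := by linarith
          exact add_le_add (mul_le_mul_of_nonneg_left h1 hc2) (mul_le_mul_of_nonneg_left h2 hc2)
      _ = c * ‖z' - z‖ := by ring
  have Hanalytic : AnalyticOnNhd ℂ H U := by
    have FdiffOn : DifferentiableOn ℂ F U :=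
      fun z hz => ((Fderiv z hz).differentiableAt).differentiableWithinAt
    have Fan : AnalyticOnNhd ℂ F U := FdiffOn.analyticOnNhd hU
    intro z hz
    refine (Fan.deriv z hz).congr ?_
    filter_upwards [hU.mem_nhds hz] with w hw
    exact (Fderiv w hw).deriv
  have hpre : IsPreconnected U := by
    have : Convex ℝ U := (convex_Ioo (β₀ - d) β₁).linear_preimage Complex.imLm
    exact this.isPreconnected
  have hmem : (β₀ : ℂ) * I ∈ U := by
    constructor <;> simp <;> linarith
  have hfreq : ∃ᶠ z in 𝓝[≠] ((β₀ : ℂ) * I), H z = 0 := by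
    have hrpos : ∀ n : ℕ, (0:ℝ) < 1 / (n + 1) := fun n => by positivity
    have htend : Tendsto (fun n : ℕ => (β₀ : ℂ) * I + (((1 / (n + 1) : ℝ)) : ℂ)) atTop
        (𝓝[≠] ((β₀ : ℂ) * I)) := by
      apply tendsto_nhdsWithin_of_tendsto_nhds_of_eventually_within
      · have h0 : Tendsto (fun n : ℕ => (((1 / (n + 1) : ℝ)) : ℂ)) atTop (𝓝 ((0:ℝ):ℂ)) :=
          (Complex.continuous_ofReal.tendsto _).comp
            tendsto_one_div_add_atTop_nhds_zero_nat
        have h1 := h0.const_add ((β₀ : ℂ) * I)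
        simpa using h1
      · filter_upwards with n
        simp only [mem_compl_iff, mem_singleton_iff]
        intro hcontr
        have h1 : (((1 / (n + 1) : ℝ)) : ℂ) = 0 := by
          have := congrArg (fun w => w - (β₀ : ℂ) * I) hcontr
          simpa using this
        rw [Complex.ofReal_eq_zero] at h1
        exact absurd h1 (ne_of_gt (hrpos n))
    refine htend.frequently (Frequently.of_forall fun n => ?_)
    have := Hline ((1 / (n + 1) : ℝ))
    rw [add_comm] at this
    exact this
  have Hzero : EqOn H 0 U :=
    Hanalytic.eqOn_zero_of_preconnected_of_frequently_eq_zero hpre hmem hfreq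
  -- conclude on the half-open strip
  have hin : ∀ z : ℂ, β₀ ≤ z.im → z.im < β₁ → h z = 0 := by
    intro z h1 h2
    have hzU : z ∈ U := ⟨by linarith, h2⟩
    have := Hzero hzU
    rw [HA z h1] at this
    simpa using this
  -- top boundary by continuity
  intro z h1 h2
  rcases lt_or_eq_of_le h2 with h2' | h2'
  · exact hin z h1 h2'
  · -- z.im = β₁ : approach from below using continuity
    set w : ℕ → ℂ := fun n => z - ((1 / (n + 1) : ℝ) : ℂ) * I with hw
    have hwim : ∀ n : ℕ, (w n).im = β₁ - 1 / (n + 1) := by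
      intro n
      simp only [hw, Complex.sub_im, Complex.mul_im, Complex.ofReal_re, Complex.ofReal_im,
        Complex.I_re, Complex.I_im, mul_one, mul_zero, zero_mul, add_zero, zero_add, sub_zero]
      rw [h2']
    have htend0 : Tendsto (fun n : ℕ => (((1 / (n + 1) : ℝ)) : ℂ)) atTop (𝓝 ((0:ℝ):ℂ)) :=
      (Complex.continuous_ofReal.tendsto _).comp tendsto_one_div_add_atTop_nhds_zero_nat
    have hseq : Tendsto w atTop (𝓝 z) := by
      have := (htend0.mul_const I).const_sub z
      simpa [hw] using this
    have hev : ∀ᶠ n : ℕ in atTop, 1 / ((n : ℝ) + 1) < d := by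
      have h' : Tendsto (fun n : ℕ => 1 / ((n : ℝ) + 1)) atTop (𝓝 0) :=
        tendsto_one_div_add_atTop_nhds_zero_nat
      exact h'.eventually_lt_const hd0
    have hmemS : ∀ᶠ n : ℕ in atTop, w n ∈ {u : ℂ | β₀ ≤ u.im ∧ u.im ≤ β₁} := by
      filter_upwards [hev] with n hn
      have hp : (0:ℝ) < 1 / (n + 1) := by positivity
      simp only [mem_setOf_eq, hwim n]
      constructor <;> linarith [hd, hn, hp]
    have hval : ∀ᶠ n : ℕ in atTop, h (w n) = 0 := by
      filter_upwards [hev] with n hn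
      have hp : (0:ℝ) < 1 / (n + 1) := by positivity
      apply hin
      · rw [hwim n]; rw [hd] at hn; linarith
      · rw [hwim n]; linarith
    have hlim : Tendsto (fun n => h (w n)) atTop (𝓝 (h z)) :=
      ((hcont z ⟨h1, h2⟩).tendsto).comp
        (tendsto_nhdsWithin_of_tendsto_nhds_of_eventually_within w hseq hmemS)
    have hlim0 : Tendsto (fun n => h (w n)) atTop (𝓝 0) :=
      Tendsto.congr' (by filter_upwards [hval] with n hn; exact hn.symm) tendsto_const_nhds
    exact tendsto_nhds_unique hlim hlim0

end Auxiliary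

/-- For `g > 0`, `β₀ < β₁`, `λ ≥ gβ₁`, there is no function which is
`C¹` on the closed strip `ℝ × [β₀,β₁]`, harmonic in the open strip, and satisfies the
overdetermined boundary conditions `ψ = 0`, `∂ψ/∂y = √(2λ−2gβ₀)` on `y = β₀` and
`ψ = Q`, `∂ψ/∂y = √(2λ−2gβ₁)` on `y = β₁`. -/
theorem no_overdetermined_strip_solution
    (g β₀ β₁ lam Q : ℝ) (hg : 0 < g) (hβ : β₀ < β₁) (hlam : g * β₁ ≤ lam) :
    ¬ ∃ ψ : ℝ × ℝ → ℝ,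
      (∀ p ∈ {p : ℝ × ℝ | β₀ ≤ p.2 ∧ p.2 ≤ β₁},
        DifferentiableWithinAt ℝ ψ {p : ℝ × ℝ | β₀ ≤ p.2 ∧ p.2 ≤ β₁} p) ∧
      ContinuousOn (fun p => fderivWithin ℝ ψ {p : ℝ × ℝ | β₀ ≤ p.2 ∧ p.2 ≤ β₁} p)
        {p : ℝ × ℝ | β₀ ≤ p.2 ∧ p.2 ≤ β₁} ∧
      ContDiffOn ℝ 2 ψ {p : ℝ × ℝ | β₀ < p.2 ∧ p.2 < β₁} ∧
      (∀ p ∈ {p : ℝ × ℝ | β₀ < p.2 ∧ p.2 < β₁}, lap ψ p = 0) ∧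
      (∀ x : ℝ, ψ (x, β₀) = 0) ∧
      (∀ x : ℝ, fderivWithin ℝ ψ {p : ℝ × ℝ | β₀ ≤ p.2 ∧ p.2 ≤ β₁} (x, β₀) (0, 1)
          = Real.sqrt (2 * lam - 2 * g * β₀)) ∧
      (∀ x : ℝ, ψ (x, β₁) = Q) ∧
      (∀ x : ℝ, fderivWithin ℝ ψ {p : ℝ × ℝ | β₀ ≤ p.2 ∧ p.2 ≤ β₁} (x, β₁) (0, 1)
          = Real.sqrt (2 * lam - 2 * g * β₁)) := by
  rintro ⟨ψ, hC1, hC1', hC2, hlap, hb0, hby0, hb1, hby1⟩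
  set S : Set (ℝ × ℝ) := {p : ℝ × ℝ | β₀ ≤ p.2 ∧ p.2 ≤ β₁} with hS
  set O : Set (ℝ × ℝ) := {p : ℝ × ℝ | β₀ < p.2 ∧ p.2 < β₁} with hO
  have hOopen : IsOpen O := by
    have : O = Prod.snd ⁻¹' Ioo β₀ β₁ := rfl
    rw [this]; exact isOpen_Ioo.preimage continuous_snd
  set a : ℝ := Real.sqrt (2 * lam - 2 * g * β₀) with ha
  set b : ℝ := Real.sqrt (2 * lam - 2 * g * β₁) with hb
  have hba : b < a := by
    apply Real.sqrt_lt_sqrt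
    · nlinarith
    · nlinarith
  -- the complexified gradient function
  set h : ℂ → ℂ := fun z =>
    ((fderivWithin ℝ ψ S (z.re, z.im) (1, 0) : ℝ) : ℂ)
      - ((fderivWithin ℝ ψ S (z.re, z.im) (0, 1) - a : ℝ) : ℂ) * I with hh
  -- the horizontal derivative vanishes on any horizontal boundary line where ψ is constant
  have hline : ∀ (y C : ℝ), β₀ ≤ y → y ≤ β₁ → (∀ x : ℝ, ψ (x, y) = C) →
      ∀ x : ℝ, fderivWithin ℝ ψ S (x, y) (1, 0) = 0 := by
    intro y C hy1 hy2 hcst x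
    have hmem : ((x, y) : ℝ × ℝ) ∈ S := ⟨hy1, hy2⟩
    have hdw : HasFDerivWithinAt ψ (fderivWithin ℝ ψ S (x, y)) S (x, y) :=
      (hC1 _ hmem).hasFDerivWithinAt
    have hγ : HasDerivAt (fun t : ℝ => ((t, y) : ℝ × ℝ)) ((1 : ℝ), (0 : ℝ)) x := by
      have := (hasDerivAt_id x).prodMk (hasDerivAt_const x y)
      simpa using this
    have hcomp : HasDerivWithinAt (fun t : ℝ => ψ (t, y))
        (fderivWithin ℝ ψ S (x, y) ((1 : ℝ), (0 : ℝ))) univ x := by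
      have := hdw.comp_hasDerivWithinAt x (hγ.hasDerivWithinAt (s := univ))
        (fun t _ => (⟨hy1, hy2⟩ : ((t, y) : ℝ × ℝ) ∈ S))
      simpa [Function.comp_def] using this
    rw [hasDerivWithinAt_univ] at hcomp
    have hconst : HasDerivAt (fun t : ℝ => ψ (t, y)) 0 x := by
      have : (fun t : ℝ => ψ (t, y)) = fun _ => C := funext hcst
      rw [this]
      exact hasDerivAt_const x C
    exact hcomp.unique hconst
  -- continuity of h on the closed strip
  have hcont : ContinuousOn h {z : ℂ | β₀ ≤ z.im ∧ z.im ≤ β₁} := by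
    have he : Continuous fun z : ℂ => ((z.re, z.im) : ℝ × ℝ) :=
      Complex.continuous_re.prodMk Complex.continuous_im
    have hmap : MapsTo (fun z : ℂ => ((z.re, z.im) : ℝ × ℝ))
        {z : ℂ | β₀ ≤ z.im ∧ z.im ≤ β₁} S := fun z hz => ⟨hz.1, hz.2⟩
    have hL : ContinuousOn (fun z : ℂ => fderivWithin ℝ ψ S (z.re, z.im))
        {z : ℂ | β₀ ≤ z.im ∧ z.im ≤ β₁} := hC1'.comp he.continuousOn hmap
    have hu : ContinuousOn (fun z : ℂ => fderivWithin ℝ ψ S (z.re, z.im) ((1:ℝ), (0:ℝ)))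
        {z : ℂ | β₀ ≤ z.im ∧ z.im ≤ β₁} :=
      (ContinuousLinearMap.apply ℝ ℝ ((1:ℝ), (0:ℝ))).continuous.comp_continuousOn hL
    have hv : ContinuousOn (fun z : ℂ => fderivWithin ℝ ψ S (z.re, z.im) ((0:ℝ), (1:ℝ)))
        {z : ℂ | β₀ ≤ z.im ∧ z.im ≤ β₁} :=
      (ContinuousLinearMap.apply ℝ ℝ ((0:ℝ), (1:ℝ))).continuous.comp_continuousOn hL
    apply ContinuousOn.sub
    · exact Complex.continuous_ofReal.comp_continuousOn hu
    · exact (Complex.continuous_ofReal.comp_continuousOn (hv.sub continuousOn_const)).mul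
        continuousOn_const
  -- differentiability of h in the open strip (Cauchy-Riemann)
  have hdiffh : ∀ z : ℂ, β₀ < z.im → z.im < β₁ → DifferentiableAt ℂ h z := by
    intro z hz1 hz2
    set p₀ : ℝ × ℝ := (z.re, z.im) with hp₀
    have hp₀O : p₀ ∈ O := ⟨hz1, hz2⟩
    -- ψ is C¹ near p₀, its derivative is differentiable at p₀
    have hC2' : ContDiffOn ℝ 1 (fderiv ℝ ψ) O := hC2.fderiv_of_isOpen hOopen (by norm_num)
    have hdψ : ∀ q ∈ O, DifferentiableAt ℝ ψ q := by
      intro q hq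
      exact ((hC2.differentiableOn (by norm_num)).differentiableAt (hOopen.mem_nhds hq))
    have hBdiff : DifferentiableAt ℝ (fderiv ℝ ψ) p₀ :=
      (hC2'.differentiableOn one_ne_zero).differentiableAt (hOopen.mem_nhds hp₀O)
    set B := fderiv ℝ (fderiv ℝ ψ) p₀ with hB
    have hBsym : ∀ v w : ℝ × ℝ, B v w = B w v := by
      intro v w
      refine second_derivative_symmetric_of_eventually (f := ψ) ?_ hBdiff.hasFDerivAt v w
      filter_upwards [hOopen.mem_nhds hp₀O] with q hq
      exact (hdψ q hq).hasFDerivAt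
    -- evaluation maps and the laplacian
    have happ : ∀ vv : ℝ × ℝ, HasFDerivAt (fun q => fderiv ℝ ψ q vv)
        ((ContinuousLinearMap.apply ℝ ℝ vv).comp B) p₀ := by
      intro vv
      exact ((ContinuousLinearMap.apply ℝ ℝ vv).hasFDerivAt).comp p₀ hBdiff.hasFDerivAt
    have hlap0 : B ((1:ℝ), (0:ℝ)) ((1:ℝ), (0:ℝ)) + B ((0:ℝ), (1:ℝ)) ((0:ℝ), (1:ℝ)) = 0 := by
      have hl := hlap p₀ hp₀O
      unfold lap at hl
      rw [(happ ((1:ℝ), (0:ℝ))).fderiv, (happ ((0:ℝ), (1:ℝ))).fderiv] at hl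
      simpa using hl
    -- h agrees near z with the version defined through fderiv
    set htilde : ℂ → ℂ := fun w =>
      ((fderiv ℝ ψ (w.re, w.im) ((1:ℝ), (0:ℝ)) : ℝ) : ℂ)
        - (((fderiv ℝ ψ (w.re, w.im) ((0:ℝ), (1:ℝ)) : ℝ) : ℂ) - ((a : ℝ) : ℂ)) * I
      with hhtilde
    have hOc : IsOpen ((fun w : ℂ => ((w.re, w.im) : ℝ × ℝ)) ⁻¹' O) :=
      hOopen.preimage (Complex.continuous_re.prodMk Complex.continuous_im)
    have hev : h =ᶠ[𝓝 z] htilde := by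
      filter_upwards [hOc.mem_nhds hp₀O] with w hw
      have hSnhds : S ∈ 𝓝 ((w.re, w.im) : ℝ × ℝ) := by
        refine mem_of_superset (hOopen.mem_nhds hw) fun q hq => ⟨le_of_lt hq.1, le_of_lt hq.2⟩
      rw [hh, hhtilde]
      simp only [fderivWithin_of_mem_nhds hSnhds]
      push_cast
      ring
    -- construct the real derivative of htilde
    have heC : HasFDerivAt (fun w : ℂ => ((w.re, w.im) : ℝ × ℝ))
        (Complex.equivRealProdCLM : ℂ →L[ℝ] ℝ × ℝ) z :=
      Complex.equivRealProdCLM.hasFDerivAt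
    have hT : HasFDerivAt (fun w : ℂ => fderiv ℝ ψ (w.re, w.im))
        (B.comp (Complex.equivRealProdCLM : ℂ →L[ℝ] ℝ × ℝ)) z := by
      have := hBdiff.hasFDerivAt.comp z heC
      exact this
    have hu1 : HasFDerivAt (fun w : ℂ => fderiv ℝ ψ (w.re, w.im) ((1:ℝ), (0:ℝ)))
        ((ContinuousLinearMap.apply ℝ ℝ ((1:ℝ), (0:ℝ))).comp
          (B.comp (Complex.equivRealProdCLM : ℂ →L[ℝ] ℝ × ℝ))) z := by
      have := ((ContinuousLinearMap.apply ℝ ℝ ((1:ℝ), (0:ℝ))).hasFDerivAt).comp z hT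
      exact this
    have hu2 : HasFDerivAt (fun w : ℂ => fderiv ℝ ψ (w.re, w.im) ((0:ℝ), (1:ℝ)))
        ((ContinuousLinearMap.apply ℝ ℝ ((0:ℝ), (1:ℝ))).comp
          (B.comp (Complex.equivRealProdCLM : ℂ →L[ℝ] ℝ × ℝ))) z := by
      have := ((ContinuousLinearMap.apply ℝ ℝ ((0:ℝ), (1:ℝ))).hasFDerivAt).comp z hT
      exact this
    have hc1 : HasFDerivAt (fun w : ℂ => ((fderiv ℝ ψ (w.re, w.im) ((1:ℝ), (0:ℝ)) : ℝ) : ℂ))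
        (Complex.ofRealCLM.comp ((ContinuousLinearMap.apply ℝ ℝ ((1:ℝ), (0:ℝ))).comp
          (B.comp (Complex.equivRealProdCLM : ℂ →L[ℝ] ℝ × ℝ)))) z := by
      have := (Complex.ofRealCLM.hasFDerivAt).comp z hu1
      exact this
    have hc2 : HasFDerivAt (fun w : ℂ => ((fderiv ℝ ψ (w.re, w.im) ((0:ℝ), (1:ℝ)) : ℝ) : ℂ))
        (Complex.ofRealCLM.comp ((ContinuousLinearMap.apply ℝ ℝ ((0:ℝ), (1:ℝ))).comp
          (B.comp (Complex.equivRealProdCLM : ℂ →L[ℝ] ℝ × ℝ)))) z := by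
      have := (Complex.ofRealCLM.hasFDerivAt).comp z hu2
      exact this
    have hhD := hc1.sub (((hc2.sub_const ((a : ℝ) : ℂ))).mul_const I)
    -- the real derivative is complex linear with ratio c
    set c : ℂ := ((B ((1:ℝ), (0:ℝ)) ((1:ℝ), (0:ℝ)) : ℝ) : ℂ)
      - ((B ((1:ℝ), (0:ℝ)) ((0:ℝ), (1:ℝ)) : ℝ) : ℂ) * I with hc
    have hres : (ContinuousLinearMap.smulRight (1 : ℂ →L[ℂ] ℂ) c).restrictScalars ℝ
        = (Complex.ofRealCLM.comp ((ContinuousLinearMap.apply ℝ ℝ ((1:ℝ), (0:ℝ))).comp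
            (B.comp (Complex.equivRealProdCLM : ℂ →L[ℝ] ℝ × ℝ))))
          - I • (Complex.ofRealCLM.comp ((ContinuousLinearMap.apply ℝ ℝ ((0:ℝ), (1:ℝ))).comp
            (B.comp (Complex.equivRealProdCLM : ℂ →L[ℝ] ℝ × ℝ)))) := by
      apply ContinuousLinearMap.ext
      intro w
      have hew : (Complex.equivRealProdCLM : ℂ →L[ℝ] ℝ × ℝ) w
          = w.re • ((1:ℝ), (0:ℝ)) + w.im • ((0:ℝ), (1:ℝ)) := by
        simp [Prod.ext_iff]
      have hB21 : B ((0:ℝ), (1:ℝ)) ((1:ℝ), (0:ℝ)) = B ((1:ℝ), (0:ℝ)) ((0:ℝ), (1:ℝ)) :=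
        hBsym _ _
      have hB22 : B ((0:ℝ), (1:ℝ)) ((0:ℝ), (1:ℝ)) = - B ((1:ℝ), (0:ℝ)) ((1:ℝ), (0:ℝ)) := by
        linarith
      simp only [ContinuousLinearMap.coe_restrictScalars', ContinuousLinearMap.smulRight_apply,
        ContinuousLinearMap.one_apply, ContinuousLinearMap.coe_sub', Pi.sub_apply,
        ContinuousLinearMap.coe_comp', Function.comp_apply, Complex.ofRealCLM_apply,
        ContinuousLinearMap.apply_apply, hew, map_add, _root_.map_smul,
        ContinuousLinearMap.add_apply, ContinuousLinearMap.coe_smul', Pi.smul_apply,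
        smul_eq_mul, hB21, hB22, hc]
      push_cast
      apply Complex.ext <;>
        simp [Complex.mul_re, Complex.mul_im, Complex.sub_re, Complex.sub_im] <;> ring
    have hdiff_tilde : DifferentiableAt ℂ htilde z := by
      refine (hasFDerivAt_of_restrictScalars ℝ (f' := ContinuousLinearMap.smulRight
        (1 : ℂ →L[ℂ] ℂ) c) ?_ hres).differentiableAt
      exact hhD
    exact hdiff_tilde.congr_of_eventuallyEq hev
  -- boundary values of h
  have hbot : ∀ x : ℝ, h ((x : ℂ) + (β₀ : ℂ) * I) = 0 := by
    intro x
    have hre : ((x : ℂ) + (β₀ : ℂ) * I).re = x := by simp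
    have him : ((x : ℂ) + (β₀ : ℂ) * I).im = β₀ := by simp
    rw [hh]
    simp only [hre, him]
    rw [hline β₀ 0 le_rfl (le_of_lt hβ) hb0 x, hby0 x]
    simp [ha]
  -- apply the uniqueness result and derive the contradiction at the top
  have htop := strip_zero_s13 β₀ β₁ hβ h hcont hdiffh hbot ((β₁ : ℂ) * I) (by simp; linarith) (by simp)
  simp only [hh] at htop
  have hretop : ((β₁ : ℂ) * I).re = 0 := by simp
  have himtop : ((β₁ : ℂ) * I).im = β₁ := by simp
  rw [hretop, himtop] at htop
  rw [hline β₁ Q (le_of_lt hβ) le_rfl hb1 0, hby1 0] at htop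
  rw [Complex.ext_iff] at htop
  simp at htop
  linarith
end
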